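/- For μ > 0, λ > 0, α ∈ (0,1), t > 0 and x > 0, the series λ^t e^{-μx} ∑_{k=0}^∞ (μ^α - λ)^k (Γ(t+k)/(Γ(k+1)Γ(t))) x^{α(t+k)-1}/Γ(α(t+k)) converges absolutely. -/

import Mathlib

open Real

private lemma nat_sub_cast_ge (m n : ℕ) : ((m:ℝ) - n) ≤ ((m - n : ℕ):ℝ) := by
  rcases le_or_gt n m with h | h
  · rw [Nat.cast_sub h]
  · have h0 : m - n = 0 := Nat.sub_eq_zero_of_le h.le
    have h1 : (m:ℝ) < n := by exact_mod_cast h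
    rw [h0]
    push_cast
    linarith

private lemma pow_sub_le_factorial (M m : ℕ) (hM : 1 ≤ M) : M ^ (m - M) ≤ Nat.factorial m := by
  induction m with
  | zero => simp
  | succ m ih =>
    rcases le_or_gt (m + 1) M with h | h
    · rw [Nat.sub_eq_zero_of_le h]
      exact Nat.one_le_iff_ne_zero.mpr (Nat.factorial_ne_zero _)
    · have h' : M ≤ m := by omega
      rw [Nat.succ_sub h', pow_succ, Nat.factorial_succ]
      calc M ^ (m - M) * M ≤ Nat.factorial m * (m + 1) := Nat.mul_le_mul ih (by omega)
        _ = (m + 1) * Nat.factorial m := Nat.mul_comm _ _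

private lemma rpow_le_Gamma (y : ℝ) (hy : 2 ≤ y) (M : ℕ) (hM : 2 ≤ M) :
    (M:ℝ) ^ (y - 2 - M) ≤ Real.Gamma y := by
  set n := ⌊y⌋₊ with hn
  have hn2 : 2 ≤ n := Nat.le_floor (by exact_mod_cast hy)
  have hn1 : 1 ≤ n := by omega
  have hny : (n:ℝ) ≤ y := Nat.floor_le (by linarith)
  have hyn : y - 1 ≤ (n:ℝ) := by
    have := Nat.lt_floor_add_one y
    linarith
  have hGn : Real.Gamma n ≤ Real.Gamma y :=
    Real.Gamma_strictMonoOn_Ici.monotoneOn (Set.mem_Ici.mpr (by exact_mod_cast hn2)) (Set.mem_Ici.mpr hy) hny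
  have hGfac : Real.Gamma n = ((Nat.factorial (n-1)) : ℝ) := by
    have hcast : (n:ℝ) = ((n - 1 : ℕ):ℝ) + 1 := by
      rw [Nat.cast_sub hn1]; push_cast; ring
    rw [hcast, Real.Gamma_nat_eq_factorial]
  have hM1 : (1:ℝ) ≤ (M:ℝ) := by exact_mod_cast (by omega : 1 ≤ M)
  have hexp : y - 2 - M ≤ (((n - 1) - M : ℕ):ℝ) := by
    have h1 : y - 2 ≤ ((n - 1 : ℕ):ℝ) := by
      rw [Nat.cast_sub hn1]; push_cast; linarith
    calc y - 2 - M ≤ ((n - 1 : ℕ):ℝ) - M := by linarith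
      _ ≤ (((n - 1) - M : ℕ):ℝ) := nat_sub_cast_ge _ _
  calc (M:ℝ) ^ (y - 2 - M) ≤ (M:ℝ) ^ ((((n - 1) - M : ℕ):ℝ)) :=
        Real.rpow_le_rpow_of_exponent_le hM1 hexp
    _ = ((M ^ ((n - 1) - M) : ℕ):ℝ) := by
        rw [Real.rpow_natCast]; push_cast; ring
    _ ≤ ((Nat.factorial (n-1)) : ℝ) := by
        exact_mod_cast pow_sub_le_factorial M (n - 1) (by omega)
    _ = Real.Gamma n := hGfac.symm
    _ ≤ Real.Gamma y := hGn

private lemma summable_pow_div_Gamma (C a b : ℝ) (hC : 0 ≤ C) (ha : 0 < a) (hb : 0 < b) :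
    Summable (fun k : ℕ => C ^ k / Real.Gamma (a + b * k)) := by
  set M : ℕ := 2 + ⌈(2 * C + 1) ^ (1 / b)⌉₊ with hMdef
  have hM2 : 2 ≤ M := Nat.le_add_right 2 _
  have hM0 : (0:ℝ) < (M:ℝ) := by positivity
  have hMC : 2 * C + 1 ≤ (M:ℝ) ^ b := by
    have h0 : (0:ℝ) ≤ 2 * C + 1 := by linarith
    have h1 : (2 * C + 1) ^ (1 / b) ≤ (M:ℝ) := by
      calc (2 * C + 1) ^ (1 / b) ≤ (⌈(2 * C + 1) ^ (1 / b)⌉₊ : ℝ) := Nat.le_ceil _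
        _ ≤ (M:ℝ) := by exact_mod_cast Nat.le_add_left _ 2
    calc 2 * C + 1 = ((2 * C + 1) ^ (1 / b)) ^ b := by
          rw [← Real.rpow_mul h0, one_div, inv_mul_cancel₀ hb.ne', Real.rpow_one]
      _ ≤ (M:ℝ) ^ b := Real.rpow_le_rpow (Real.rpow_nonneg h0 _) h1 hb.le
  have hMb : (0:ℝ) < (M:ℝ) ^ b := Real.rpow_pos_of_pos hM0 _
  have hhalf : C / (M:ℝ) ^ b ≤ 1 / 2 := by
    rw [div_le_div_iff₀ hMb (by norm_num)]
    linarith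
  apply Summable.of_norm_bounded_eventually_nat
    (g := fun k => (M:ℝ) ^ (2 + (M:ℝ) - a) * (1 / 2 : ℝ) ^ k)
  · exact (summable_geometric_of_lt_one (by norm_num) (by norm_num)).mul_left _
  · filter_upwards [Filter.eventually_ge_atTop ⌈2 / b⌉₊] with k hk
    have hy2 : 2 ≤ a + b * k := by
      have h1 : 2 / b ≤ (k:ℝ) := le_trans (Nat.le_ceil _) (by exact_mod_cast hk)
      have h2 : 2 ≤ b * k := by
        rw [div_le_iff₀ hb] at h1; linarith
      linarith
    have hG := rpow_le_Gamma (a + b * k) hy2 M hM2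
    have hGpos : 0 < Real.Gamma (a + b * k) := Real.Gamma_pos_of_pos (by positivity)
    have hMpos : (0:ℝ) < (M:ℝ) ^ (a + b * k - 2 - M) := Real.rpow_pos_of_pos hM0 _
    rw [Real.norm_eq_abs, abs_of_nonneg (by positivity)]
    have e1 : (M:ℝ) ^ (a + b * (k:ℝ) - 2 - M) = ((M:ℝ) ^ b) ^ k / (M:ℝ) ^ (2 + (M:ℝ) - a) := by
      rw [← Real.rpow_natCast ((M:ℝ) ^ b) k, ← Real.rpow_mul hM0.le, ← Real.rpow_sub hM0]
      congr 1
      ring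
    calc C ^ k / Real.Gamma (a + b * k)
        ≤ C ^ k / (M:ℝ) ^ (a + b * (k:ℝ) - 2 - M) := by gcongr
      _ = (M:ℝ) ^ (2 + (M:ℝ) - a) * (C / (M:ℝ) ^ b) ^ k := by
          rw [e1, div_pow]
          field_simp
      _ ≤ (M:ℝ) ^ (2 + (M:ℝ) - a) * (1 / 2 : ℝ) ^ k :=
          mul_le_mul_of_nonneg_left (pow_le_pow_left₀ (by positivity) hhalf k)
            (le_of_lt (Real.rpow_pos_of_pos hM0 _))

private lemma Gamma_add_nat_le (t : ℝ) (ht : 0 < t) :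
    ∀ k : ℕ, Real.Gamma (t + k) ≤ (t + 1) ^ k * ((Nat.factorial k) : ℝ) * Real.Gamma t := by
  intro k
  induction k with
  | zero => simp
  | succ k ih =>
    have hGpos : 0 < Real.Gamma (t + k) := Real.Gamma_pos_of_pos (by positivity)
    have h1 : t + ((k:ℕ) + 1 : ℕ) = (t + k) + 1 := by push_cast; ring
    rw [h1, Real.Gamma_add_one (by positivity)]
    have h2 : t + (k:ℝ) ≤ (t + 1) * ((k:ℝ) + 1) := by
      nlinarith [mul_nonneg ht.le (Nat.cast_nonneg k)]
    calc (t + k) * Real.Gamma (t + k)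
        ≤ (t + k) * ((t + 1) ^ k * ((Nat.factorial k) : ℝ) * Real.Gamma t) := by
          have := mul_le_mul_of_nonneg_left ih (by positivity : (0:ℝ) ≤ t + k)
          exact this
      _ ≤ ((t + 1) * ((k:ℝ) + 1)) * ((t + 1) ^ k * ((Nat.factorial k) : ℝ) * Real.Gamma t) := by
          apply mul_le_mul_of_nonneg_right h2
          positivity
      _ = (t + 1) ^ (k + 1) * (((Nat.factorial (k+1)) : ℝ)) * Real.Gamma t := by
          rw [Nat.factorial_succ]
          push_cast
          ring

theorem tempered_mllp_density_abs_convergent (m lam α t x : ℝ) (hm : 0 < m) (hlam : 0 < lam)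
    (hα : α ∈ Set.Ioo (0:ℝ) 1) (ht : 0 < t) (hx : 0 < x) :
    Summable (fun k : ℕ =>
      |lam ^ t * Real.exp (-m * x) * (m ^ α - lam) ^ k *
        (Gamma (t + k) / (Gamma (k + 1) * Gamma t)) *
        (x ^ (α * (t + k) - 1) / Gamma (α * (t + k)))|) := by
  obtain ⟨hα0, hα1⟩ := hα
  have hGt : 0 < Real.Gamma t := Real.Gamma_pos_of_pos ht
  set A := m ^ α - lam with hA
  set C := |A| * (t + 1) * x ^ α with hC
  set D := lam ^ t * Real.exp (-m * x) * x ^ (α * t - 1) with hD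
  have hC0 : 0 ≤ C := by positivity
  have hsum := (summable_pow_div_Gamma C (α * t) α hC0 (by positivity) hα0).mul_left D
  apply Summable.of_nonneg_of_le (fun k => abs_nonneg _) _ hsum
  intro k
  have hGtk : 0 < Real.Gamma (t + k) := Real.Gamma_pos_of_pos (by positivity)
  have hGk1 : 0 < Real.Gamma ((k:ℝ) + 1) := Real.Gamma_pos_of_pos (by positivity)
  have hGak : 0 < Real.Gamma (α * (t + k)) := Real.Gamma_pos_of_pos (by positivity)
  have hlamt : 0 < lam ^ t := Real.rpow_pos_of_pos hlam _
  have hxp : 0 < x ^ (α * (t + (k:ℝ)) - 1) := Real.rpow_pos_of_pos hx _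
  have hR : Real.Gamma (t + k) / (Real.Gamma ((k:ℝ) + 1) * Real.Gamma t) ≤ (t + 1) ^ k := by
    rw [Real.Gamma_nat_eq_factorial, div_le_iff₀ (by positivity)]
    calc Real.Gamma (t + k) ≤ (t + 1) ^ k * ((Nat.factorial k) : ℝ) * Real.Gamma t :=
          Gamma_add_nat_le t ht k
      _ = (t + 1) ^ k * (((Nat.factorial k) : ℝ) * Real.Gamma t) := by ring
  have e2 : x ^ (α * (t + (k:ℝ)) - 1) = x ^ (α * t - 1) * (x ^ α) ^ k := by
    rw [show α * (t + (k:ℝ)) - 1 = (α * t - 1) + α * (k:ℝ) by ring, Real.rpow_add hx,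
      Real.rpow_mul hx.le, Real.rpow_natCast]
  have e3 : α * (t + (k:ℝ)) = α * t + α * (k:ℝ) := by ring
  have habs : |lam ^ t * Real.exp (-m * x) * A ^ k *
        (Real.Gamma (t + k) / (Real.Gamma ((k:ℝ) + 1) * Real.Gamma t)) *
        (x ^ (α * (t + (k:ℝ)) - 1) / Real.Gamma (α * (t + (k:ℝ))))| =
      lam ^ t * Real.exp (-m * x) * |A| ^ k *
        (Real.Gamma (t + k) / (Real.Gamma ((k:ℝ) + 1) * Real.Gamma t)) *
        (x ^ (α * (t + (k:ℝ)) - 1) / Real.Gamma (α * (t + (k:ℝ)))) := by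
    have hpos1 : (0:ℝ) < Real.Gamma (t + k) / (Real.Gamma ((k:ℝ) + 1) * Real.Gamma t) :=
      div_pos hGtk (mul_pos hGk1 hGt)
    have hpos2 : (0:ℝ) < x ^ (α * (t + (k:ℝ)) - 1) / Real.Gamma (α * (t + (k:ℝ))) :=
      div_pos hxp hGak
    simp only [abs_mul, abs_pow]
    rw [abs_of_pos hlamt, abs_of_pos (Real.exp_pos _), abs_of_pos hpos1, abs_of_pos hpos2]
  rw [habs]
  calc lam ^ t * Real.exp (-m * x) * |A| ^ k *
        (Real.Gamma (t + k) / (Real.Gamma ((k:ℝ) + 1) * Real.Gamma t)) *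
        (x ^ (α * (t + (k:ℝ)) - 1) / Real.Gamma (α * (t + (k:ℝ))))
      ≤ lam ^ t * Real.exp (-m * x) * |A| ^ k * (t + 1) ^ k *
        (x ^ (α * (t + (k:ℝ)) - 1) / Real.Gamma (α * (t + (k:ℝ)))) := by
        apply mul_le_mul_of_nonneg_right _ (by positivity)
        exact mul_le_mul_of_nonneg_left hR (by positivity)
    _ = D * (C ^ k / Real.Gamma (α * t + α * (k:ℝ))) := by
        rw [e2, ← e3, hC, hD, mul_pow, mul_pow]
        ring
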